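/- Let α be an alternating 2-form on V satisfying both k♭ ∧ α = 0 and α(k, ·) = 0, where k is lightlike for the nondegenerate symmetric bilinear form g. Then α = k♭ ∧ β for a transversal 1-form β, and the full contraction of α with itself using g vanishes: α_{μν} α^{μν} = 0. -/
import Mathlib


/-- If an alternating 2-form `α` satisfies both `k♭ ∧ α = 0` (`k_{[μ}α_{νρ]} = 0`)
and `α(k,·) = 0` (`k^μ α_{μν} = 0`) for a lightlike `k`, then `α = k♭ ∧ β` for a
transversal 1-form `β`, and the full contraction `α_{μν} α^{μν}` vanishes. -/
theorem stmt_5 {n : ℕ} (g ginv : Fin n → Fin n → ℝ)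
    (hgs : ∀ μ ν, g μ ν = g ν μ)
    (hinv : ∀ μ ν, ∑ σ, g μ σ * ginv σ ν = if μ = ν then 1 else 0)
    (hinv' : ∀ μ ν, ∑ σ, ginv μ σ * g σ ν = if μ = ν then 1 else 0)
    (k l : Fin n → ℝ)
    (hkk : ∑ μ, ∑ ν, g μ ν * k μ * k ν = 0)
    (hll : ∑ μ, ∑ ν, g μ ν * l μ * l ν = 0)
    (hkl : ∑ μ, ∑ ν, g μ ν * k μ * l ν = 1)
    (α : Fin n → Fin n → ℝ) (halt : ∀ μ ν, α μ ν = -α ν μ)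
    (kb : Fin n → ℝ) (hkb : ∀ μ, kb μ = ∑ ν, g μ ν * k ν)
    (h1 : ∀ μ ν ρ, kb μ * α ν ρ + kb ν * α ρ μ + kb ρ * α μ ν = 0)
    (h2 : ∀ ν, ∑ μ, k μ * α μ ν = 0) :
    (∃ β : Fin n → ℝ,
      (∑ μ, β μ * k μ = 0) ∧ (∑ μ, β μ * l μ = 0) ∧
      (∀ μ ν, α μ ν = kb μ * β ν - kb ν * β μ)) ∧
    (∑ μ, ∑ ν, ∑ ρ, ∑ σ, α μ ν * ginv μ ρ * ginv ν σ * α ρ σ = 0) := by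
  set β : Fin n → ℝ := fun ν => ∑ μ, l μ * α μ ν with hβ
  -- l · k♭ = 1
  have hlkb : ∑ μ, l μ * kb μ = 1 := by
    calc ∑ μ, l μ * kb μ = ∑ μ, ∑ ν, g ν μ * k ν * l μ := by
          refine Finset.sum_congr rfl fun μ _ => ?_
          rw [hkb, Finset.mul_sum]
          exact Finset.sum_congr rfl fun ν _ => by rw [hgs]; ring
      _ = ∑ ν, ∑ μ, g ν μ * k ν * l μ := Finset.sum_comm
      _ = 1 := hkl
  -- β · k = 0
  have hβk : ∑ μ, β μ * k μ = 0 := by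
    calc ∑ ν, β ν * k ν = ∑ ν, ∑ μ, l μ * α μ ν * k ν := by
          simp only [hβ, Finset.sum_mul]
      _ = ∑ μ, ∑ ν, l μ * α μ ν * k ν := Finset.sum_comm
      _ = ∑ μ, -(l μ * ∑ ν, k ν * α ν μ) := by
          refine Finset.sum_congr rfl fun μ _ => ?_
          rw [Finset.mul_sum, ← Finset.sum_neg_distrib]
          exact Finset.sum_congr rfl fun ν _ => by rw [halt μ ν]; ring
      _ = 0 := by simp [h2]
  -- β · l = 0 (antisymmetry)
  have hβl : ∑ μ, β μ * l μ = 0 := by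
    have hS : (∑ μ, β μ * l μ) = -(∑ μ, β μ * l μ) := by
      calc ∑ ν, β ν * l ν = ∑ ν, ∑ μ, l μ * α μ ν * l ν := by
            simp only [hβ, Finset.sum_mul]
        _ = ∑ μ, ∑ ν, l μ * α μ ν * l ν := Finset.sum_comm
        _ = ∑ μ, -(∑ ν, l ν * α ν μ * l μ) := by
            refine Finset.sum_congr rfl fun μ _ => ?_
            rw [← Finset.sum_neg_distrib]
            exact Finset.sum_congr rfl fun ν _ => by rw [halt μ ν]; ring
        _ = -(∑ μ, ∑ ν, l ν * α ν μ * l μ) := by rw [Finset.sum_neg_distrib]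
        _ = -(∑ μ, β μ * l μ) := by
            congr 1
            refine Finset.sum_congr rfl fun μ _ => ?_
            rw [hβ, Finset.sum_mul]
    linarith
  -- α = k♭ ∧ β
  have hα : ∀ ν ρ, α ν ρ = kb ν * β ρ - kb ρ * β ν := by
    intro ν ρ
    have e : ∑ μ, (l μ * kb μ * α ν ρ + kb ν * (l μ * α ρ μ) + kb ρ * (l μ * α μ ν)) = 0 :=
      Finset.sum_eq_zero fun μ _ => by linear_combination l μ * h1 μ ν ρ
    rw [Finset.sum_add_distrib, Finset.sum_add_distrib, ← Finset.sum_mul,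
      ← Finset.mul_sum, ← Finset.mul_sum, hlkb] at e
    have hρ : ∑ μ, l μ * α ρ μ = -β ρ := by
      rw [hβ, ← Finset.sum_neg_distrib]
      exact Finset.sum_congr rfl fun μ _ => by rw [halt ρ μ]; ring
    rw [hρ] at e
    have hν : (∑ μ, l μ * α μ ν) = β ν := by rw [hβ]
    rw [hν] at e
    linarith
  refine ⟨⟨β, hβk, hβl, hα⟩, ?_⟩
  -- raising indices on k♭ gives back k
  have hraise : ∀ ρ, ∑ μ, kb μ * ginv μ ρ = k ρ := by
    intro ρ
    calc ∑ μ, kb μ * ginv μ ρ = ∑ μ, ∑ ν, k ν * (g ν μ * ginv μ ρ) := by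
          refine Finset.sum_congr rfl fun μ _ => ?_
          rw [hkb, Finset.sum_mul]
          exact Finset.sum_congr rfl fun ν _ => by rw [hgs]; ring
      _ = ∑ ν, k ν * ∑ μ, g ν μ * ginv μ ρ := by
          rw [Finset.sum_comm]
          exact Finset.sum_congr rfl fun ν _ => by rw [Finset.mul_sum]
      _ = k ρ := by
          simp only [hinv, mul_ite, mul_one, mul_zero]
          simp
  have hraise' : ∀ μ, ∑ ρ, ginv μ ρ * kb ρ = k μ := by
    intro μ
    calc ∑ ρ, ginv μ ρ * kb ρ = ∑ ρ, ∑ ν, k ν * (ginv μ ρ * g ρ ν) := by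
          refine Finset.sum_congr rfl fun ρ _ => ?_
          rw [hkb, Finset.mul_sum]
          exact Finset.sum_congr rfl fun ν _ => by ring
      _ = ∑ ν, k ν * ∑ ρ, ginv μ ρ * g ρ ν := by
          rw [Finset.sum_comm]
          exact Finset.sum_congr rfl fun ν _ => by rw [Finset.mul_sum]
      _ = k μ := by
          simp only [hinv', mul_ite, mul_one, mul_zero]
          simp
  -- the four scalar contractions
  have hA : ∑ μ, ∑ ρ, kb μ * ginv μ ρ * kb ρ = 0 := by
    calc ∑ μ, ∑ ρ, kb μ * ginv μ ρ * kb ρ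
        = ∑ ρ, (∑ μ, kb μ * ginv μ ρ) * kb ρ := by
          rw [Finset.sum_comm]
          exact Finset.sum_congr rfl fun ρ _ => by rw [Finset.sum_mul]
      _ = ∑ ρ, ∑ ν, g ρ ν * k ρ * k ν := by
          refine Finset.sum_congr rfl fun ρ _ => ?_
          rw [hraise, hkb, Finset.mul_sum]
          exact Finset.sum_congr rfl fun ν _ => by ring
      _ = 0 := hkk
  have hB : ∑ μ, ∑ ρ, kb μ * ginv μ ρ * β ρ = 0 := by
    calc ∑ μ, ∑ ρ, kb μ * ginv μ ρ * β ρ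
        = ∑ ρ, (∑ μ, kb μ * ginv μ ρ) * β ρ := by
          rw [Finset.sum_comm]
          exact Finset.sum_congr rfl fun ρ _ => by rw [Finset.sum_mul]
      _ = ∑ ρ, β ρ * k ρ := by
          refine Finset.sum_congr rfl fun ρ _ => ?_
          rw [hraise]; ring
      _ = 0 := hβk
  have hB' : ∑ μ, ∑ ρ, β μ * ginv μ ρ * kb ρ = 0 := by
    calc ∑ μ, ∑ ρ, β μ * ginv μ ρ * kb ρ
        = ∑ μ, β μ * ∑ ρ, ginv μ ρ * kb ρ := by
          refine Finset.sum_congr rfl fun μ _ => ?_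
          rw [Finset.mul_sum]
          exact Finset.sum_congr rfl fun ρ _ => by ring
      _ = ∑ μ, β μ * k μ := by
          refine Finset.sum_congr rfl fun μ _ => by rw [hraise']
      _ = 0 := hβk
  -- factoring lemma
  have key : ∀ F G : Fin n → Fin n → ℝ,
      (∑ μ, ∑ ν, ∑ ρ, ∑ σ, F μ ρ * G ν σ)
        = (∑ μ, ∑ ρ, F μ ρ) * (∑ ν, ∑ σ, G ν σ) := by
    intro F G
    rw [Finset.sum_mul_sum]
    refine Finset.sum_congr rfl fun μ _ => ?_
    refine Finset.sum_congr rfl fun ν _ => ?_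
    rw [Finset.sum_mul_sum]
  calc ∑ μ, ∑ ν, ∑ ρ, ∑ σ, α μ ν * ginv μ ρ * ginv ν σ * α ρ σ
      = ∑ μ, ∑ ν, ∑ ρ, ∑ σ,
          ((kb μ * ginv μ ρ * kb ρ) * (β ν * ginv ν σ * β σ)
          - (kb μ * ginv μ ρ * β ρ) * (β ν * ginv ν σ * kb σ)
          - (β μ * ginv μ ρ * kb ρ) * (kb ν * ginv ν σ * β σ)
          + (β μ * ginv μ ρ * β ρ) * (kb ν * ginv ν σ * kb σ)) := by
        refine Finset.sum_congr rfl fun μ _ => Finset.sum_congr rfl fun ν _ =>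
          Finset.sum_congr rfl fun ρ _ => Finset.sum_congr rfl fun σ _ => ?_
        rw [hα μ ν, hα ρ σ]; ring
    _ = 0 := by
        simp only [Finset.sum_sub_distrib, Finset.sum_add_distrib]
        rw [key (fun μ ρ => kb μ * ginv μ ρ * kb ρ) (fun ν σ => β ν * ginv ν σ * β σ),
          key (fun μ ρ => kb μ * ginv μ ρ * β ρ) (fun ν σ => β ν * ginv ν σ * kb σ),
          key (fun μ ρ => β μ * ginv μ ρ * kb ρ) (fun ν σ => kb ν * ginv ν σ * β σ),
          key (fun μ ρ => β μ * ginv μ ρ * β ρ) (fun ν σ => kb ν * ginv ν σ * kb σ)]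
        rw [hA, hB, hB']
        ring
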